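/- In every reachable configuration of the (k,ℓ)-pebble game with colors, for each color c_i (1 ≤ i ≤ k), the subgraph H_i of H consisting of the edges carrying a pebble of color c_i is (1,0)-sparse. -/
import Mathlib


open scoped Classical

namespace PebbleGame

/-- A configuration of the `(k,ℓ)`-pebble game with colors: a directed multigraph
whose edges are records `(tail, head, color)` (the color of an edge is the color of
the unique pebble lying on it), together with the multiset of colors of the pebbles
sitting on each vertex. -/
structure PGConfig (V : Type) (k : ℕ) where
  edges : Multiset (V × V × Fin k)
  pebs : V → Multiset (Fin k)

variable {V : Type} [DecidableEq V] {k ℓ : ℕ}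

/-- The configuration resulting from an add-edge move: a pebble of color `c` is picked
up from `v`, the directed edge `vw` is added and the pebble is placed on it. -/
def addEdgeCfg (H : PGConfig V k) (v w : V) (c : Fin k) : PGConfig V k :=
  ⟨(v, w, c) ::ₘ H.edges, Function.update H.pebs v ((H.pebs v).erase c)⟩

/-- The configuration resulting from a pebble-slide move along the edge `(v, w, c)`,
using a pebble of color `c'` on `w`: the edge `vw` is replaced by `wv`, the pebble of
color `c` that was on the edge goes to `v`, and the pebble of color `c'` from `w` is
placed on the new edge `wv`. -/
def slideCfg (H : PGConfig V k) (v w : V) (c c' : Fin k) : PGConfig V k :=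
  ⟨(w, v, c') ::ₘ H.edges.erase (v, w, c),
    Function.update (Function.update H.pebs w ((H.pebs w).erase c')) v
      (c ::ₘ Function.update H.pebs w ((H.pebs w).erase c') v)⟩

/-- A legal move of the `(k,ℓ)`-pebble game with colors. -/
inductive Step (k ℓ : ℕ) : PGConfig V k → PGConfig V k → Prop
  | add (H : PGConfig V k) (v w : V) (c : Fin k)
      (hpeb : ℓ + 1 ≤ ∑ u ∈ ({v, w} : Finset V), (H.pebs u).card)
      (hc : c ∈ H.pebs v) :
      Step k ℓ H (addEdgeCfg H v w c)
  | slide (H : PGConfig V k) (v w : V) (c c' : Fin k)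
      (he : (v, w, c) ∈ H.edges)
      (hc : c' ∈ H.pebs w) :
      Step k ℓ H (slideCfg H v w c c')

/-- The initial configuration: no edges, and one pebble of each of the `k` colors on
every vertex. -/
def initCfg (V : Type) [DecidableEq V] [Fintype V] (k : ℕ) : PGConfig V k :=
  ⟨0, fun _ => Finset.univ.val⟩

/-- A configuration is reachable if it arises from the initial configuration by a
finite sequence of legal moves. -/
def Reachable [Fintype V] (k ℓ : ℕ) (H : PGConfig V k) : Prop :=
  Relation.ReflTransGen (Step k ℓ) (initCfg V k) H

/-- The underlying undirected multigraph (multiset of edges) of a configuration. -/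
def undirected (H : PGConfig V k) : Multiset (Sym2 V) :=
  H.edges.map fun e => s(e.1, e.2.1)

/-- The (undirected) edges of a configuration carrying a pebble of color `c`. -/
def monoEdges (H : PGConfig V k) (c : Fin k) : Multiset (Sym2 V) :=
  (H.edges.filter fun e => e.2.2 = c).map fun e => s(e.1, e.2.1)

/-- The undirected edges of color `c` among a multiset `F` of directed colored
edges. -/
def monoOf (F : Multiset (V × V × Fin k)) (c : Fin k) : Multiset (Sym2 V) :=
  (F.filter fun e => e.2.2 = c).map fun e => s(e.1, e.2.1)

/-- `G` (a multiset of undirected edges on the fixed finite vertex set `V`) is a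
`(k,ℓ)`-pebble-game graph if it is the underlying undirected multigraph of some
reachable configuration. -/
def PebbleGameGraph [Fintype V] (k ℓ : ℕ) (E : Multiset (Sym2 V)) : Prop :=
  ∃ H : PGConfig V k, Reachable k ℓ H ∧ undirected H = E

/-- The edges of `E` spanned by the vertex set `S` (both endpoints in `S`). -/
def spanned (E : Multiset (Sym2 V)) (S : Finset V) : Multiset (Sym2 V) :=
  E.filter fun e => e ∈ S.sym2

/-- A multigraph is `(k,ℓ)`-sparse if every nonempty set of `n'` vertices spans at
most `k n' - ℓ` edges. -/
def Sparse (k ℓ : ℕ) (E : Multiset (Sym2 V)) : Prop :=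
  ∀ S : Finset V, S.Nonempty → (spanned E S).card ≤ k * S.card - ℓ

/-- A multigraph is `(k,ℓ)`-tight if it is `(k,ℓ)`-sparse with exactly `k|V| - ℓ`
edges. -/
def Tight [Fintype V] (k ℓ : ℕ) (E : Multiset (Sym2 V)) : Prop :=
  Sparse k ℓ E ∧ E.card = k * Fintype.card V - ℓ

/-- Connectivity (as undirected multigraphs) via the edges of `F`. -/
def Conn (F : Multiset (Sym2 V)) : V → V → Prop :=
  Relation.ReflTransGen fun a b => s(a, b) ∈ F

/-- The connected components of the graph with vertex set `S` and edge multiset `F`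
(whose edges are assumed to be spanned by `S`), as a finset of vertex sets. -/
noncomputable def components (S : Finset V) (F : Multiset (Sym2 V)) : Finset (Finset V) :=
  S.image fun v => S.filter fun u => Conn F v u

/-- The tree-pieces of the graph `(S, F)`: connected components that contain no cycle,
i.e. whose spanned edge count is exactly one less than their vertex count (an isolated
vertex is a tree-piece). -/
noncomputable def treePieces (S : Finset V) (F : Multiset (Sym2 V)) : Finset (Finset V) :=
  (components S F).filter fun C => (spanned F C).card + 1 = C.card

/-- The number of tree-pieces of the graph `(S, F)`. -/
noncomputable def treePieceCount (S : Finset V) (F : Multiset (Sym2 V)) : ℕ :=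
  (treePieces S F).card

/-- A multigraph contains a cycle iff some nonempty vertex set spans at least as many
edges as it has vertices. -/
def HasCycle (F : Multiset (Sym2 V)) : Prop :=
  ∃ S : Finset V, S.Nonempty ∧ S.card ≤ (spanned F S).card

/-- A spanning tree on the whole (finite) vertex set: connected with `|V| - 1` edges. -/
def IsSpanningTree [Fintype V] (T : Multiset (Sym2 V)) : Prop :=
  (∀ u v : V, Conn T u v) ∧ T.card + 1 = Fintype.card V

/-- A spanning map-graph: the edges admit an orientation in which every vertex has
out-degree exactly one. -/
def IsSpanningMapGraph [Fintype V] (T : Multiset (Sym2 V)) : Prop :=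
  ∃ M : Multiset (V × V), M.map (fun p => s(p.1, p.2)) = T ∧
    ∀ v : V, (M.filter fun p => p.1 = v).card = 1

/-- A `(k,ℓ)`-maps-and-trees decomposition: `ℓ` edge-disjoint spanning trees and
`k - ℓ` edge-disjoint spanning map-graphs whose union is `E`. -/
def MapsAndTrees [Fintype V] (k ℓ : ℕ) (E : Multiset (Sym2 V)) : Prop :=
  ∃ (T : Fin ℓ → Multiset (Sym2 V)) (M : Fin (k - ℓ) → Multiset (Sym2 V)),
    ((∑ i, T i) + ∑ j, M j) = E ∧ (∀ i, IsSpanningTree (T i)) ∧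
      ∀ j, IsSpanningMapGraph (M j)

/-- `(S, T)` is a (possibly single-vertex) tree: nonempty vertex set `S`, edges spanned
by `S`, connected on `S`, and `|T| + 1 = |S|`. -/
def IsTreeOn (S : Finset V) (T : Multiset (Sym2 V)) : Prop :=
  S.Nonempty ∧ (∀ e ∈ T, e ∈ S.sym2) ∧ (∀ u ∈ S, ∀ v ∈ S, Conn T u v) ∧
    T.card + 1 = S.card

/-- An `ℓTk` decomposition of `E`: `ℓ` edge-disjoint (not necessarily spanning,
possibly single-vertex) trees `(S i, T i)` whose edges partition `E`, such that every
vertex belongs to exactly `k` of the trees. -/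
def LTkDecomp (k ℓ : ℕ) (E : Multiset (Sym2 V)) (S : Fin ℓ → Finset V)
    (T : Fin ℓ → Multiset (Sym2 V)) : Prop :=
  (∑ i, T i) = E ∧ (∀ i, IsTreeOn (S i) (T i)) ∧
    ∀ v : V, (Finset.univ.filter fun i => v ∈ S i).card = k

/-- A proper `ℓTk`: an `ℓTk` decomposition such that every nonempty subgraph
(vertex set `U`, together with a sub-multiset `F i` of each tree spanned by `U`)
contains at least `ℓ` tree-pieces, the tree-pieces being the connected components of
the intersections of the trees with the subgraph. -/
def ProperLTk (k ℓ : ℕ) (E : Multiset (Sym2 V)) : Prop :=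
  ∃ (S : Fin ℓ → Finset V) (T : Fin ℓ → Multiset (Sym2 V)),
    LTkDecomp k ℓ E S T ∧
      ∀ U : Finset V, U.Nonempty →
        ∀ F : Fin ℓ → Multiset (Sym2 V),
          (∀ i, F i ≤ T i) → (∀ i, ∀ e ∈ F i, e ∈ U.sym2) →
            ℓ ≤ ∑ i, treePieceCount (U ∩ S i) (F i)

/-- One pebble-slide move (as a relation between configurations). -/
def SlideRel (k : ℕ) (A B : PGConfig V k) : Prop :=
  ∃ (v w : V) (c c' : Fin k), (v, w, c) ∈ A.edges ∧ c' ∈ A.pebs w ∧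
    B = slideCfg A v w c c'

/-- A canonical move of the `(k,ℓ)`-pebble game with colors: add-edge moves cover the
new edge with a color present on both endpoints if one exists, and otherwise with the
highest-numbered color present; pebble-slide moves never create a monochromatic
cycle. -/
inductive CanStep (k ℓ : ℕ) : PGConfig V k → PGConfig V k → Prop
  | add (H : PGConfig V k) (v w : V) (c : Fin k)
      (hpeb : ℓ + 1 ≤ ∑ u ∈ ({v, w} : Finset V), (H.pebs u).card)
      (hc : c ∈ H.pebs v)
      (hcanon : c ∈ H.pebs w ∨
        ((∀ c' : Fin k, c' ∈ H.pebs v → c' ∉ H.pebs w) ∧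
          ∀ c' : Fin k, (c' ∈ H.pebs v ∨ c' ∈ H.pebs w) → c' ≤ c)) :
      CanStep k ℓ H (addEdgeCfg H v w c)
  | slide (H : PGConfig V k) (v w : V) (c c' : Fin k)
      (he : (v, w, c) ∈ H.edges)
      (hc : c' ∈ H.pebs w)
      (hnocycle : ∀ i : Fin k,
        HasCycle (monoEdges (slideCfg H v w c c') i) → HasCycle (monoEdges H i)) :
      CanStep k ℓ H (slideCfg H v w c c')

/-- The graph obtained from a configuration by replacing every pebble lying on a
vertex by a loop at that vertex. -/
def withLoops [Fintype V] (H : PGConfig V k) : Multiset (Sym2 V) :=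
  undirected H + Finset.univ.val.bind fun v => Multiset.replicate (H.pebs v).card s(v, v)

end PebbleGame
open PebbleGame

namespace PebbleAux

open PebbleGame

variable {V : Type} [DecidableEq V] {k : ℕ}

/-- out-degree in color `d`. -/
noncomputable def outdeg (H : PGConfig V k) (u : V) (d : Fin k) : ℕ :=
  Multiset.countP (fun e => e.1 = u ∧ e.2.2 = d) H.edges

/-- key invariant: outdegree in color d plus number of pebbles of color d on u is 1. -/
def Inv (H : PGConfig V k) : Prop :=
  ∀ u : V, ∀ d : Fin k, outdeg H u d + (H.pebs u).count d = 1

lemma countP_erase {α : Type*} [DecidableEq α] (p : α → Prop) [DecidablePred p]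
    {a : α} {s : Multiset α} (h : a ∈ s) :
    Multiset.countP p (s.erase a) + (if p a then 1 else 0) = Multiset.countP p s := by
  conv_rhs => rw [← Multiset.cons_erase h]
  rw [Multiset.countP_cons]

lemma count_erase {α : Type*} [DecidableEq α] (a b : α) (s : Multiset α) (h : b ∈ s) :
    Multiset.count a (s.erase b) + (if a = b then 1 else 0) = Multiset.count a s := by
  by_cases hab : a = b
  · subst hab
    simp [Multiset.count_erase_self]
    have : 1 ≤ Multiset.count a s := Multiset.one_le_count_iff_mem.2 h
    omega
  · simp [hab, Multiset.count_erase_of_ne hab]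

lemma inv_step {ℓ : ℕ} {A B : PGConfig V k} (h : Step k ℓ A B) (hA : Inv A) : Inv B := by
  classical
  cases h with
  | add v w c hpeb hc =>
    intro u d
    have h1 := hA u d
    simp only [addEdgeCfg, outdeg, Multiset.countP_cons] at *
    by_cases huv : u = v
    · subst huv
      simp only [Function.update_self]
      have h2 := count_erase d c (A.pebs u) hc
      have hcle : 1 ≤ Multiset.count d (A.pebs u) ∨ ¬ d = c := by
        by_cases hdc : d = c
        · subst hdc; exact Or.inl (Multiset.one_le_count_iff_mem.2 hc)
        · exact Or.inr hdc
      split_ifs at * with h3 h4 <;>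
        first | omega | (exfalso; tauto)
    · rw [Function.update_of_ne huv]
      have : ¬ ((v, w, c).1 = u ∧ (v, w, c).2.2 = d) := by
        simp only [not_and]; intro hh; exact absurd hh.symm huv
      rw [if_neg this]
      omega
  | slide v w c c' he hc =>
    intro u d
    have h1 := hA u d
    simp only [slideCfg, outdeg, Multiset.countP_cons] at *
    have herase := countP_erase (fun e => e.1 = u ∧ e.2.2 = d) he
    simp only at herase
    have h2 := count_erase d c' (A.pebs w) hc
    have hcle : 1 ≤ Multiset.count c' (A.pebs w) := Multiset.one_le_count_iff_mem.2 hc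
    by_cases huv : u = v
    · subst huv
      rw [Function.update_self, Multiset.count_cons]
      by_cases huw : u = w
      · subst huw
        rw [Function.update_self]
        have h2' := count_erase d c' (A.pebs u) hc
        split_ifs at * <;> first | omega | (exfalso; tauto)
      · rw [Function.update_of_ne (fun hh => huw hh)]
        split_ifs at * <;> first | omega | (exfalso; tauto)
    · rw [Function.update_of_ne huv]
      by_cases huw : u = w
      · subst huw
        rw [Function.update_self]
        split_ifs at * <;> first | omega | (exfalso; tauto)
      · rw [Function.update_of_ne huw]
        split_ifs at * <;> first | omega | (exfalso; tauto)

lemma countP_le_sum (m : Multiset (V × V × Fin k)) (c : Fin k) (S : Finset V) :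
    Multiset.countP (fun e => e.2.2 = c ∧ s(e.1, e.2.1) ∈ S.sym2) m ≤
      ∑ v ∈ S, Multiset.countP (fun e => e.1 = v ∧ e.2.2 = c) m := by
  classical
  induction m using Multiset.induction with
  | empty => simp
  | cons a m ih =>
    simp only [Multiset.countP_cons, Finset.sum_add_distrib]
    refine Nat.add_le_add ih ?_
    by_cases hP : a.2.2 = c ∧ s(a.1, a.2.1) ∈ S.sym2
    · rw [if_pos hP]
      obtain ⟨ha2, hmem⟩ := hP
      have ha1 : a.1 ∈ S := (Finset.mk_mem_sym2_iff.1 hmem).1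
      have : (∑ v ∈ S, if a.1 = v ∧ a.2.2 = c then 1 else 0) =
          ∑ v ∈ S, if a.1 = v then 1 else 0 := by
        refine Finset.sum_congr rfl fun v _ => ?_
        simp [ha2]
      rw [this, Finset.sum_ite_eq S a.1 (fun _ => 1), if_pos ha1]
    · rw [if_neg hP]
      exact Nat.zero_le _

end PebbleAux

/-- in every reachable configuration, for each color `c`, the subgraph
consisting of the edges carrying a pebble of color `c` is `(1,0)`-sparse. -/
theorem monochromatic_subgraphs_sparse {V : Type} [Fintype V] [DecidableEq V]
    (k ℓ : ℕ) (hk : 1 ≤ k) (hℓ : ℓ ≤ 2 * k - 1) (H : PGConfig V k)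
    (hH : Reachable k ℓ H) (c : Fin k) :
    Sparse 1 0 (monoEdges H c) := by
  classical
  have hinv : PebbleAux.Inv H := by
    induction hH with
    | refl =>
      intro u d
      simp only [PebbleAux.outdeg, initCfg, Multiset.countP_zero, Nat.zero_add]
      exact Multiset.count_eq_one_of_mem Finset.univ.nodup (Finset.mem_univ d)
    | tail _ hstep ih => exact PebbleAux.inv_step hstep ih
  intro S hS
  have h1 : (spanned (monoEdges H c) S).card =
      Multiset.countP (fun e => e.2.2 = c ∧ s(e.1, e.2.1) ∈ S.sym2) H.edges := by
    rw [spanned, monoEdges, ← Multiset.countP_eq_card_filter, Multiset.countP_map,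
      ← Multiset.countP_eq_card_filter, Multiset.countP_filter]
    congr 1
    funext e
    simp [and_comm]
  have h2 := PebbleAux.countP_le_sum H.edges c S
  have h3 : ∑ v ∈ S, Multiset.countP (fun e => e.1 = v ∧ e.2.2 = c) H.edges ≤
      ∑ _v ∈ S, 1 :=
    Finset.sum_le_sum fun v _ => by
      have := hinv v c
      simp only [PebbleAux.outdeg] at this
      omega
  simp only [Finset.sum_const, smul_eq_mul, mul_one] at h3
  rw [h1]
  omega
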